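/- The function F(θ,φ,φ̃,x₁) = (sin 2φ · sin 2θ)/(2√(4sin²φ + cos²φ·sin²2θ)) · √(1-x₁²) · sin φ̃, over θ,φ ∈ [-π/2,π/2], φ̃ ∈ [0,2π), x₁ ∈ [-1,1] (where defined), has maximum absolute value 1/3, attained when x₁ = 0, sin φ̃ = ±1, and the point corresponds to p = ±(1/√3)(0,0,1,0,1,1,0). -/

import Mathlib

noncomputable section

open Real

/-- Slant-angle cosine of a torus orbit, as a function of the parameters. -/
def slantF (theta phi phit x1 : ℝ) : ℝ :=
  (sin (2 * phi) * sin (2 * theta)) /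
      (2 * Real.sqrt (4 * sin phi ^ 2 + cos phi ^ 2 * sin (2 * theta) ^ 2)) *
    Real.sqrt (1 - x1 ^ 2) * sin phit

lemma sq_eq_helper (a b : ℝ) (ha : 0 ≤ a) (hb : 0 ≤ b) (h : a ^ 2 = b ^ 2) : a = b := by
  nlinarith [sq_nonneg (a - b), sq_nonneg (a + b)]

/-- The slant-angle cosine F has maximal absolute value 1/3, attained with x₁ = 0,
    sin φ̃ = ±1, at the parameters corresponding to p = ±(1/√3)(0,0,1,0,1,1,0). -/
theorem stmt18 :
    (∀ theta phi phit x1 : ℝ,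
      theta ∈ Set.Icc (-(π / 2)) (π / 2) → phi ∈ Set.Icc (-(π / 2)) (π / 2) →
      phit ∈ Set.Ico 0 (2 * π) → x1 ∈ Set.Icc (-1 : ℝ) 1 →
      4 * sin phi ^ 2 + cos phi ^ 2 * sin (2 * theta) ^ 2 ≠ 0 →
      |slantF theta phi phit x1| ≤ 1 / 3) ∧
    (∃ theta phi phit : ℝ,
      theta ∈ Set.Icc (-(π / 2)) (π / 2) ∧ phi ∈ Set.Icc (-(π / 2)) (π / 2) ∧
      phit ∈ Set.Ico 0 (2 * π) ∧
      |slantF theta phi phit 0| = 1 / 3 ∧ |sin phit| = 1 ∧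
      ((sin theta * cos phi = 1 / Real.sqrt 3 ∧ sin phi = 1 / Real.sqrt 3 ∧
          cos theta * sin phit * cos phi = 1 / Real.sqrt 3 ∧
          cos theta * cos phit * cos phi = 0) ∨
        (sin theta * cos phi = -(1 / Real.sqrt 3) ∧ sin phi = -(1 / Real.sqrt 3) ∧
          cos theta * sin phit * cos phi = -(1 / Real.sqrt 3) ∧
          cos theta * cos phit * cos phi = 0))) := by
  constructor
  · intro theta phi phit x1 _ _ _ hx1 hD
    set s := sin phi with hs
    set c := cos phi with hc
    set t := sin (2 * theta) with ht
    set D := 4 * s ^ 2 + c ^ 2 * t ^ 2 with hDdef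
    have hsc : s ^ 2 + c ^ 2 = 1 := sin_sq_add_cos_sq phi
    have ht1 : t ^ 2 ≤ 1 := sin_sq_le_one _
    have hDpos : 0 < D := lt_of_le_of_ne (by positivity) (Ne.symm hD)
    have hsqD : 0 < Real.sqrt D := Real.sqrt_pos.mpr hDpos
    -- key inequality
    have key : 3 * |s * c * t| ≤ Real.sqrt D := by
      rw [Real.le_sqrt (by positivity) hDpos.le]
      have habs : (3 * |s * c * t|) ^ 2 = 9 * (s ^ 2 * c ^ 2 * t ^ 2) := by
        rw [mul_pow, ← abs_pow]
        rw [abs_of_nonneg (by positivity : (0:ℝ) ≤ (s * c * t) ^ 2)]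
        ring
      rw [habs, hDdef]
      nlinarith [sq_nonneg (3 * s ^ 2 - 1), sq_nonneg s, sq_nonneg c, sq_nonneg t,
        mul_nonneg (sq_nonneg s) (sub_nonneg.mpr ht1),
        mul_nonneg (mul_nonneg (sq_nonneg s) (sq_nonneg s)) (sub_nonneg.mpr ht1)]
    have hx1' : Real.sqrt (1 - x1 ^ 2) ≤ 1 := by
      have := Real.sqrt_le_sqrt (show 1 - x1 ^ 2 ≤ 1 by nlinarith [hx1.1, hx1.2])
      simpa using this
    have hsinphit : |sin phit| ≤ 1 := abs_sin_le_one _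
    have hmain : |sin (2 * phi) * t / (2 * Real.sqrt D)| ≤ 1 / 3 := by
      rw [sin_two_mul, ← hs, ← hc, abs_div]
      rw [div_le_div_iff₀ (by positivity) (by norm_num)]
      have : |2 * s * c * t| = 2 * |s * c * t| := by
        rw [show (2 : ℝ) * s * c * t = 2 * (s * c * t) by ring, abs_mul]
        norm_num
      rw [this, abs_of_pos (by positivity : (0:ℝ) < 2 * Real.sqrt D)]
      nlinarith [key]
    calc |slantF theta phi phit x1|
        = |sin (2 * phi) * t / (2 * Real.sqrt D)| * Real.sqrt (1 - x1 ^ 2) * |sin phit| := by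
          rw [slantF, abs_mul, abs_mul, abs_of_nonneg (Real.sqrt_nonneg _)]
      _ ≤ 1 / 3 * 1 * 1 := by
          apply mul_le_mul (mul_le_mul hmain hx1' (Real.sqrt_nonneg _) (by norm_num))
            hsinphit (abs_nonneg _) (by norm_num)
      _ = 1 / 3 := by norm_num
  · -- witness
    have h3 : Real.sqrt 3 ^ 2 = 3 := Real.sq_sqrt (by norm_num)
    have h3pos : (0:ℝ) < Real.sqrt 3 := Real.sqrt_pos.mpr (by norm_num)
    have h2 : Real.sqrt 2 ^ 2 = 2 := Real.sq_sqrt (by norm_num)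
    have h2pos : (0:ℝ) < Real.sqrt 2 := Real.sqrt_pos.mpr (by norm_num)
    have hle : (1 : ℝ) / Real.sqrt 3 ≤ 1 := by
      rw [div_le_one h3pos]; nlinarith
    have hge : (-1 : ℝ) ≤ 1 / Real.sqrt 3 := by
      have : (0:ℝ) ≤ 1 / Real.sqrt 3 := by positivity
      linarith
    refine ⟨π / 4, Real.arcsin (1 / Real.sqrt 3), π / 2, ?_, Real.arcsin_mem_Icc _, ?_, ?_, ?_, ?_⟩
    · constructor <;> [linarith [pi_pos]; linarith [pi_pos]]
    · constructor <;> [positivity; linarith [pi_pos]]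
    · -- |slantF| = 1/3
      have hsin : sin (Real.arcsin (1 / Real.sqrt 3)) = 1 / Real.sqrt 3 :=
        Real.sin_arcsin hge hle
      have hcos : cos (Real.arcsin (1 / Real.sqrt 3)) = Real.sqrt (2 / 3) := by
        rw [Real.cos_arcsin]
        congr 1
        rw [div_pow, h3]
        norm_num
      have h23 : Real.sqrt (2 / 3) ^ 2 = 2 / 3 := Real.sq_sqrt (by norm_num)
      have h23pos : (0:ℝ) < Real.sqrt (2 / 3) := Real.sqrt_pos.mpr (by norm_num)
      have hst : sin (2 * (π / 4)) = 1 := by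
        rw [show 2 * (π / 4) = π / 2 by ring, sin_pi_div_two]
      rw [slantF, hsin, hcos, hst, sin_two_mul, hsin, hcos, sin_pi_div_two]
      have hinner : 4 * (1 / Real.sqrt 3) ^ 2 + Real.sqrt (2 / 3) ^ 2 * 1 ^ 2 = 2 := by
        rw [div_pow, h3, h23]; norm_num
      rw [hinner]
      have hs2 : Real.sqrt (2:ℝ) ≠ 0 := ne_of_gt h2pos
      have hval : 2 * (1 / Real.sqrt 3) * Real.sqrt (2 / 3) = 2 * Real.sqrt 2 / 3 := by
        have : Real.sqrt (2 / 3) = Real.sqrt 2 / Real.sqrt 3 := Real.sqrt_div (by norm_num) 3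
        rw [this]
        field_simp
        exact h3.symm
      rw [hval]
      have : 2 * Real.sqrt 2 / 3 * 1 / (2 * Real.sqrt 2) * Real.sqrt (1 - 0 ^ 2) * 1
          = 1 / 3 := by
        rw [show (1:ℝ) - 0 ^ 2 = 1 by norm_num, Real.sqrt_one]
        field_simp
      rw [this]
      norm_num
    · rw [sin_pi_div_two]; norm_num
    · left
      have hsin : sin (Real.arcsin (1 / Real.sqrt 3)) = 1 / Real.sqrt 3 :=
        Real.sin_arcsin hge hle
      have hcos : cos (Real.arcsin (1 / Real.sqrt 3)) = Real.sqrt 2 / Real.sqrt 3 := by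
        rw [Real.cos_arcsin]
        rw [show (1:ℝ) - (1 / Real.sqrt 3) ^ 2 = 2 / 3 by rw [div_pow, h3]; norm_num]
        rw [Real.sqrt_div (by norm_num) 3]
      have hsp4 : sin (π / 4) = Real.sqrt 2 / 2 := Real.sin_pi_div_four
      have hcp4 : cos (π / 4) = Real.sqrt 2 / 2 := Real.cos_pi_div_four
      have hmain : Real.sqrt 2 / 2 * (Real.sqrt 2 / Real.sqrt 3) = 1 / Real.sqrt 3 := by
        field_simp
        exact h2
      refine ⟨by rw [hsp4, hcos]; exact hmain, hsin, ?_, ?_⟩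
      · rw [hcp4, hcos, sin_pi_div_two]
        rw [mul_one]; exact hmain
      · rw [cos_pi_div_two]; ring
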